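/- In the 3D cyclic algebra, for any υ', μ ∈ Π with υ' ≠ 0, there exists a unique ω ∈ Π such that ω·υ' = μ. -/

import Mathlib

/-- The product of the 3D cyclic algebra on `ℝ³`: `e₁` is the identity,
`e₂·e₂ = e₃`, `e₂·e₃ = e₁`, `e₃·e₃ = e₂`. -/
noncomputable def cmul (u v : Fin 3 → ℝ) : Fin 3 → ℝ :=
  ![u 0 * v 0 + u 1 * v 2 + u 2 * v 1,
    u 0 * v 1 + u 1 * v 0 + u 2 * v 2,
    u 0 * v 2 + u 1 * v 1 + u 2 * v 0]

theorem stmt_8 (υ' μ : Fin 3 → ℝ) (hυ' : υ' 0 + υ' 1 + υ' 2 = 0) (hne : υ' ≠ 0)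
    (hμ : μ 0 + μ 1 + μ 2 = 0) :
    ∃! ω : Fin 3 → ℝ, (ω 0 + ω 1 + ω 2 = 0) ∧ cmul ω υ' = μ := by
  set a := υ' 0 with ha
  set b := υ' 1 with hb
  set p := μ 0 with hp
  set q := μ 1 with hq
  have hc2 : υ' 2 = -a - b := by linarith
  have hm2 : μ 2 = -p - q := by linarith
  set D : ℝ := 3 * (a ^ 2 + a * b + b ^ 2) with hDdef
  have hD : D ≠ 0 := by
    intro h
    apply hne
    have ha0 : a = 0 := by nlinarith [sq_nonneg (a + b), sq_nonneg (a - b), sq_nonneg b]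
    have hb0 : b = 0 := by nlinarith [sq_nonneg (a + b), sq_nonneg (a - b), sq_nonneg a]
    funext i
    fin_cases i
    · exact ha0
    · exact hb0
    · show υ' 2 = 0; rw [hc2, ha0, hb0]; ring
  refine ⟨![((2 * a + b) * p + (a + 2 * b) * q) / D,
            (-(a + 2 * b) * p + (a - b) * q) / D,
            ((b - a) * p + (-2 * a - b) * q) / D], ⟨?_, ?_⟩, ?_⟩
  · show ((2 * a + b) * p + (a + 2 * b) * q) / D + (-(a + 2 * b) * p + (a - b) * q) / D + ((b - a) * p + (-2 * a - b) * q) / D = (0 : ℝ)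
    field_simp
    ring
  · funext i
    fin_cases i <;>
      · simp [cmul, hc2, hm2, div_mul_eq_mul_div, ← add_div, ← ha, ← hb, ← hp, ← hq]
        rw [div_eq_iff hD]
        ring
  · rintro ω ⟨hs, heq⟩
    have e0 : ω 0 * a + ω 1 * (-a - b) + ω 2 * b = p := by
      have := congrFun heq 0
      simpa [cmul, hc2] using this
    have e1 : ω 0 * b + ω 1 * a + ω 2 * (-a - b) = q := by
      have := congrFun heq 1
      simpa [cmul, hc2] using this
    funext i
    fin_cases i
    · show ω 0 = ((2 * a + b) * p + (a + 2 * b) * q) / D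
      rw [eq_div_iff hD]
      linear_combination (2 * a + b) * e0 + (a + 2 * b) * e1 + (a ^ 2 + a * b + b ^ 2) * hs
    · show ω 1 = (-(a + 2 * b) * p + (a - b) * q) / D
      rw [eq_div_iff hD]
      linear_combination (-(a + 2 * b)) * e0 + (a - b) * e1 + (a ^ 2 + a * b + b ^ 2) * hs
    · show ω 2 = ((b - a) * p + (-2 * a - b) * q) / D
      rw [eq_div_iff hD]
      linear_combination (b - a) * e0 + (-2 * a - b) * e1 + (a ^ 2 + a * b + b ^ 2) * hs
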